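/- Iteration-count theorem for asynchronous SGD (deterministic form): under the assumptions of the combined recursion with a₀ = ‖w⁰ - w*‖² ≤ D, for any ε with ε > 2ηM²g(τ)/m where g(τ) = 1 + 2ηmτ² + 2τ, we have ‖wᵏ - w*‖² ≤ ε for all k ≥ (1/(ηm))·log(2D/ε). -/

import Mathlib

open Real MeasureTheory

local notation "⟪" x ", " y "⟫" => @inner ℝ _ _ x y

theorem stmt16 (n : ℕ) (m η M D ε : ℝ) (τ : ℕ)
    (hm : 0 < m) (hη : 0 < η) (hηm : η * m < 1) (hM : 0 ≤ M) (hD : 0 < D)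
    (w : ℕ → EuclideanSpace ℝ (Fin n)) (wstar : EuclideanSpace ℝ (Fin n))
    (hrec : ∀ j, ‖w (j + 1) - wstar‖ ^ 2 ≤ (1 - η * m) * ‖w j - wstar‖ ^ 2
      + η ^ 2 * M ^ 2 * (1 + 2 * η * m * τ ^ 2 + 2 * τ))
    (h0 : ‖w 0 - wstar‖ ^ 2 ≤ D)
    (hε : ε > 2 * η * M ^ 2 * (1 + 2 * η * m * τ ^ 2 + 2 * τ) / m) :
    ∀ k : ℕ, (k : ℝ) ≥ 1 / (η * m) * Real.log (2 * D / ε) → ‖w k - wstar‖ ^ 2 ≤ ε := by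
  set b := η * m with hb
  have hb0 : 0 < b := mul_pos hη hm
  set g : ℝ := 1 + 2 * η * m * τ ^ 2 + 2 * τ with hg
  have hg0 : 0 < g := by positivity
  set c : ℝ := η ^ 2 * M ^ 2 * g with hc
  have hc0 : 0 ≤ c := by positivity
  set S : ℝ := c / b with hS
  have hS0 : 0 ≤ S := div_nonneg hc0 hb0.le
  have hSε : S < ε / 2 := by
    have : S = η * M ^ 2 * g / m := by
      rw [hS, hc, hb]; field_simp
    rw [this]
    have h2 : 2 * η * M ^ 2 * g / m = 2 * (η * M ^ 2 * g / m) := by ring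
    rw [h2] at hε
    linarith
  have hε0 : 0 < ε := lt_of_le_of_lt (by positivity : (0:ℝ) ≤ 2 * η * M ^ 2 * g / m) hε
  have h1b : 0 ≤ 1 - b := by linarith
  -- main induction
  have key : ∀ k : ℕ, ‖w k - wstar‖ ^ 2 ≤ (1 - b) ^ k * D + S := by
    intro k
    induction k with
    | zero => simpa using le_trans h0 (by linarith)
    | succ k ih =>
      have := hrec k
      have hstep : (1 - b) * ‖w k - wstar‖ ^ 2 + c ≤ (1 - b) ^ (k + 1) * D + S := by
        have h2 : (1 - b) * ‖w k - wstar‖ ^ 2 ≤ (1 - b) * ((1 - b) ^ k * D + S) :=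
          mul_le_mul_of_nonneg_left ih h1b
        have h3 : (1 - b) * ((1 - b) ^ k * D + S) + c = (1 - b) ^ (k + 1) * D + (S - b * S + c) := by
          ring
        have h4 : b * S = c := by
          rw [hS]; field_simp
        nlinarith
      calc ‖w (k + 1) - wstar‖ ^ 2 ≤ (1 - b) * ‖w k - wstar‖ ^ 2 + c := this
        _ ≤ (1 - b) ^ (k + 1) * D + S := hstep
  intro k hk
  have hexp : (1 - b) ^ k ≤ Real.exp (-(b * k)) := by
    have h1 : 1 - b ≤ Real.exp (-b) := by
      have := Real.add_one_le_exp (-b); linarith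
    calc (1 - b) ^ k ≤ Real.exp (-b) ^ k := pow_le_pow_left₀ h1b h1 k
      _ = Real.exp (-(b * k)) := by rw [← Real.exp_nat_mul]; ring_nf
  have hkb : Real.log (2 * D / ε) ≤ b * k := by
    have h := mul_le_mul_of_nonneg_left hk hb0.le
    have heq : b * (1 / b * Real.log (2 * D / ε)) = Real.log (2 * D / ε) := by
      field_simp
    linarith
  have hpos : 0 < 2 * D / ε := by positivity
  have hexp2 : Real.exp (-(b * k)) ≤ Real.exp (-Real.log (2 * D / ε)) :=
    Real.exp_le_exp.mpr (by linarith)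
  have hval : Real.exp (-Real.log (2 * D / ε)) = ε / (2 * D) := by
    rw [Real.exp_neg, Real.exp_log hpos, inv_div]
  have hfin : (1 - b) ^ k * D ≤ ε / 2 := by
    have h5 : (1 - b) ^ k ≤ ε / (2 * D) := by
      calc (1 - b) ^ k ≤ Real.exp (-(b * k)) := hexp
        _ ≤ Real.exp (-Real.log (2 * D / ε)) := hexp2
        _ = ε / (2 * D) := hval
    have := mul_le_mul_of_nonneg_right h5 hD.le
    calc (1 - b) ^ k * D ≤ ε / (2 * D) * D := this
      _ = ε / 2 := by field_simp
  calc ‖w k - wstar‖ ^ 2 ≤ (1 - b) ^ k * D + S := key k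
    _ ≤ ε / 2 + S := by linarith
    _ ≤ ε := by linarith
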